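/- Let D = diag(σ₁², …, σ_d²) with all σᵢ² > 0 and let α > 0. Define Q* = diag(min{α/2, σ₁²}, …, min{α/2, σ_d²}). Then Q* is positive definite, D − Q* is positive semidefinite, and for every d×d real symmetric positive definite matrix Q with D − Q positive semidefinite, tr(Q*) − (α/2)·log det(Q*) ≤ tr(Q) − (α/2)·log det(Q). (Diagonalized reduced problem in the proof of Theorem 2.) -/

import Mathlib

open Matrix

open Finset in

lemma trace_eq_sum_eigenvalues' {n : ℕ} {M : Matrix (Fin n) (Fin n) ℝ}
    (h : M.IsHermitian) : M.trace = ∑ i, h.eigenvalues i := by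
  rw [h.trace_eq_sum_eigenvalues]
  simp

lemma log_det_le' {n : ℕ} {M : Matrix (Fin n) (Fin n) ℝ} (hM : M.PosDef) :
    Real.log M.det ≤ M.trace - n := by
  have h := hM.isHermitian
  have hev : ∀ i, 0 < h.eigenvalues i := hM.eigenvalues_pos
  have hdet : M.det = ∏ i, h.eigenvalues i := by
    rw [h.det_eq_prod_eigenvalues]; norm_num
  rw [hdet, trace_eq_sum_eigenvalues' h,
    Real.log_prod (fun i _ => (hev i).ne')]
  calc ∑ i, Real.log (h.eigenvalues i) ≤ ∑ i, (h.eigenvalues i - 1) :=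
        Finset.sum_le_sum fun i _ => Real.log_le_sub_one_of_pos (hev i)
    _ = ∑ i, h.eigenvalues i - n := by simp [Finset.sum_sub_distrib]

lemma posdef_conj_diag' {n : ℕ} {Q : Matrix (Fin n) (Fin n) ℝ} (hQ : Q.PosDef)
    {s : Fin n → ℝ} (hs : ∀ i, s i ≠ 0) :
    (Matrix.diagonal s * Q * Matrix.diagonal s).PosDef := by
  refine Matrix.PosDef.of_dotProduct_mulVec_pos ?_ ?_
  · have := hQ.isHermitian
    unfold Matrix.IsHermitian at *
    rw [conjTranspose_mul, conjTranspose_mul, diagonal_conjTranspose, this]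
    simp [Matrix.mul_assoc, star_trivial]
  · intro x hx
    have hsx : (Matrix.diagonal s) *ᵥ x ≠ 0 := by
      intro hcon
      apply hx
      funext i
      have := congrFun hcon i
      simp [mulVec_diagonal] at this
      exact (this.resolve_left (hs i))
    have := hQ.dotProduct_mulVec_pos hsx
    convert this using 1
    simp only [star_trivial, ← mulVec_mulVec]
    rw [dotProduct_mulVec x (Matrix.diagonal s)]
    congr 1
    funext i
    simp [vecMul_diagonal, mulVec_diagonal, mul_comm]

lemma scalar_key' {c q σ : ℝ} (hc : 0 < c) (hσ : 0 < σ) (hq : 0 < q) (hqσ : q ≤ σ) :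
    0 ≤ q - min c σ - c * (q / min c σ - 1) := by
  rcases le_total c σ with h | h
  · rw [min_eq_left h]
    have : c * (q / c) = q := by field_simp
    nlinarith
  · rw [min_eq_right h]
    have h4 : q - σ - c * (q / σ - 1) = (σ - q) * (c - σ) / σ := by
      field_simp; ring
    rw [h4]
    exact div_nonneg (mul_nonneg (by linarith) (by linarith)) hσ.le


/-- Diagonalized reduced problem in the proof of Theorem 2: with
`D = diag(σᵢ²)` and `Q* = diag(min{α/2, σᵢ²})`, the matrix `Q*` is positive
definite, `Q* ⪯ D`, and `Q*` minimizes `tr(Q) − (α/2) log det Q` over all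
symmetric positive definite `Q ⪯ D`. -/
theorem diagonal_reduced_problem {d : ℕ}
    (σsq : Fin d → ℝ) (hσ : ∀ i, 0 < σsq i) (α : ℝ) (hα : 0 < α)
    (Qstar : Matrix (Fin d) (Fin d) ℝ)
    (hQstar : Qstar = Matrix.diagonal (fun i => min (α / 2) (σsq i))) :
    Qstar.PosDef ∧ (Matrix.diagonal σsq - Qstar).PosSemidef ∧
      ∀ Q : Matrix (Fin d) (Fin d) ℝ, Q.PosDef →
        (Matrix.diagonal σsq - Q).PosSemidef →
        Qstar.trace - (α / 2) * Real.log Qstar.det ≤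
          Q.trace - (α / 2) * Real.log Q.det := by
  subst hQstar
  have hc : 0 < α / 2 := by linarith
  set m : Fin d → ℝ := fun i => min (α / 2) (σsq i) with hm_def
  have hm : ∀ i, 0 < m i := fun i => lt_min hc (hσ i)
  refine ⟨Matrix.posDef_diagonal_iff.mpr hm, ?_, ?_⟩
  · rw [Matrix.diagonal_sub]
    exact Matrix.PosSemidef.diagonal (fun i => sub_nonneg.mpr (min_le_right _ _))
  intro Q hQ hle
  have hdiagpos : ∀ i, 0 < Q i i := by
    intro i
    have hx : (Pi.single i (1:ℝ) : Fin d → ℝ) ≠ 0 := by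
      intro h
      have := congrFun h i
      simp at this
    have h0 := hQ.dotProduct_mulVec_pos hx
    simpa [Matrix.mulVec_single, dotProduct, Pi.single_apply] using h0
  have hdle : ∀ i, Q i i ≤ σsq i := by
    intro i
    have h0 := hle.dotProduct_mulVec_nonneg (Pi.single i 1)
    have : 0 ≤ σsq i - Q i i := by
      simpa [Matrix.sub_mulVec, Matrix.mulVec_single, dotProduct, Pi.single_apply,
        Matrix.mulVec_diagonal] using h0
    linarith
  set s : Fin d → ℝ := fun i => (Real.sqrt (m i))⁻¹ with hs_def
  have hsne : ∀ i, s i ≠ 0 := fun i => inv_ne_zero (Real.sqrt_pos.mpr (hm i)).ne'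
  have hs2 : ∀ i, s i * s i = (m i)⁻¹ := by
    intro i
    rw [hs_def, ← mul_inv, Real.mul_self_sqrt (hm i).le]
  set M := Matrix.diagonal s * Q * Matrix.diagonal s with hM_def
  have hMpd : M.PosDef := posdef_conj_diag' hQ hsne
  have key := log_det_le' hMpd
  have hdetM : M.det = (∏ i, (m i)⁻¹) * Q.det := by
    rw [hM_def, Matrix.det_mul, Matrix.det_mul, Matrix.det_diagonal]
    rw [mul_comm ((∏ i, s i) * Q.det), ← mul_assoc, ← Finset.prod_mul_distrib]
    congr 1
    exact Finset.prod_congr rfl (fun i _ => hs2 i)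
  have htrM : M.trace = ∑ i, Q i i * (m i)⁻¹ := by
    rw [hM_def, Matrix.trace]
    congr 1
    funext i
    rw [Matrix.diag_apply, Matrix.mul_diagonal, Matrix.diagonal_mul, ← hs2 i]
    ring
  have hlogM : Real.log M.det = Real.log Q.det - ∑ i, Real.log (m i) := by
    rw [hdetM, Real.log_mul (Finset.prod_ne_zero_iff.mpr (fun i _ => inv_ne_zero (hm i).ne'))
      hQ.det_pos.ne', Real.log_prod (fun i _ => inv_ne_zero (hm i).ne')]
    simp [Real.log_inv]
    ring
  rw [hlogM, htrM] at key
  have htrQs : (Matrix.diagonal m).trace = ∑ i, m i := by simp [Matrix.trace_diagonal]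
  have hdetQs : Real.log (Matrix.diagonal m).det = ∑ i, Real.log (m i) := by
    rw [Matrix.det_diagonal, Real.log_prod (fun i _ => (hm i).ne')]
  have htrQ : Q.trace = ∑ i, Q i i := rfl
  rw [htrQs, hdetQs, htrQ]
  have hsum : 0 ≤ ∑ i, (Q i i - m i - (α/2) * (Q i i / m i - 1)) :=
    Finset.sum_nonneg fun i _ => scalar_key' hc (hσ i) (hdiagpos i) (hdle i)
  have hexp : ∑ i, (Q i i - m i - (α/2) * (Q i i / m i - 1)) =
      (∑ i, Q i i) - (∑ i, m i) - (α/2) * ((∑ i, Q i i * (m i)⁻¹) - d) := by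
    simp only [div_eq_mul_inv, Finset.sum_sub_distrib, ← Finset.mul_sum, mul_sub]
    simp [Finset.card_univ, mul_comm]
  rw [hexp] at hsum
  have key2 := mul_le_mul_of_nonneg_left key hc.le
  nlinarith [key2, hsum]
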